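/- Let V : ℕ → ℝ satisfy V 0 = 1, V 1 = n, V i = (n+m) V(i-1) - n V(i-2) with n ≥ 3, m ≥ 2 and φ = sqrt((m+n)^2 - 4n). Then for all i, ∑_{j=0}^{i} V j = (−n((m+n−φ)/2)^i + n((m+n+φ)/2)^i + φ) / φ. -/

import Mathlib

lemma stmt_18_aux (n m φ a b : ℝ) (V : ℕ → ℝ) (hφ : φ ≠ 0)
    (hab : a * b = n) (hsum : a + b = m + n) (hba : b - a = φ)
    (hV0 : V 0 = 1) (hV1 : V 1 = n)
    (hrec : ∀ i, 2 ≤ i → V i = (n + m) * V (i-1) - n * V (i-2)) :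
    ∀ i, (∑ j ∈ Finset.range (i+1), V j = (-n * a^i + n * b^i + φ)/φ) ∧
      V i = ((b-n)/φ) * a^i + ((n-a)/φ) * b^i := by
  intro i
  induction i using Nat.twoStepInduction with
  | zero =>
    constructor
    · simp [hV0]; field_simp
    · rw [hV0]; simp; field_simp; linear_combination -hba
  | one =>
    constructor
    · rw [Finset.sum_range_succ, Finset.sum_range_one, hV0, hV1]
      field_simp
      linear_combination (-n) * hba
    · rw [hV1, pow_one, pow_one]
      field_simp
      linear_combination (-n) * hba
  | more i ih1 ih2 =>
    have hV2 : V (i+2) = (n + m) * V (i+1) - n * V i := by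
      have := hrec (i+2) (by omega)
      simpa using this
    have ha2 : a^(i+2) = (n+m)*a^(i+1) - n*a^i := by
      linear_combination a^(i+1) * hsum - a^i * hab
    have hb2 : b^(i+2) = (n+m)*b^(i+1) - n*b^i := by
      linear_combination b^(i+1) * hsum - b^i * hab
    have hVc : V (i+2) = ((b-n)/φ) * a^(i+2) + ((n-a)/φ) * b^(i+2) := by
      rw [hV2, ih2.2, ih1.2]
      linear_combination (-(b-n)/φ) * ha2 + (-(n-a)/φ) * hb2
    refine ⟨?_, hVc⟩
    rw [Finset.sum_range_succ, ih2.1, hVc]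
    field_simp
    linear_combination (a^(i+1) - b^(i+1)) * hab

theorem stmt_18 (n m : ℝ) (hn : 3 ≤ n) (hm : 2 ≤ m)
    (V : ℕ → ℝ) (hV0 : V 0 = 1) (hV1 : V 1 = n)
    (hrec : ∀ i, 2 ≤ i → V i = (n + m) * V (i-1) - n * V (i-2)) :
    ∀ i, ∑ j ∈ Finset.range (i+1), V j =
      (-n * ((m + n - Real.sqrt ((m + n)^2 - 4*n))/2)^i
        + n * ((m + n + Real.sqrt ((m + n)^2 - 4*n))/2)^i
        + Real.sqrt ((m + n)^2 - 4*n)) / Real.sqrt ((m + n)^2 - 4*n) := by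
  intro i
  have hpos : 0 < (m + n)^2 - 4*n := by nlinarith
  set φ := Real.sqrt ((m + n)^2 - 4*n) with hφdef
  have hφ2 : φ^2 = (m + n)^2 - 4*n := Real.sq_sqrt hpos.le
  have hφne : φ ≠ 0 := ne_of_gt (Real.sqrt_pos.mpr hpos)
  exact (stmt_18_aux n m φ ((m + n - φ)/2) ((m + n + φ)/2) V hφne
    (by linear_combination (-1/4 : ℝ) * hφ2) (by ring) (by ring)
    hV0 hV1 hrec i).1
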